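/- The side-pairing of the 20-gon pairing side k with side k+3 when k ≡ 2 (mod 4) and side k with side k+9 when k ≡ 3 (mod 4) (indices mod 20) yields exactly 3 equivalence classes of vertices: the odd-indexed vertices {a₁, a₃, ..., a₁₉} form one class, {a₂, a₆, a₁₀, a₁₄, a₁₈} a second, and {a₄, a₈, a₁₂, a₁₆, a₂₀} a third. -/
import Mathlib


/-- The basic vertex identifications of the 20-gon: vertices are labelled by
`ZMod 20` (vertex `i` is `aᵢ`, with `a₂₀ = a₀`), side `k` has endpoints
`a_k, a_{k+1}`, and pairing side `k` with side `k'` (orientation-reversingly)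
identifies `a_k ∼ a_{k'+1}` and `a_{k+1} ∼ a_{k'}`.  Side `k` is paired with
`k + 3` for `k ∈ {2,6,10,14,18}` and with `k + 9` for `k ∈ {3,7,11,15,19}`. -/
def sidePairRel (i j : ZMod 20) : Prop :=
  ∃ k : ZMod 20,
    ((k = 2 ∨ k = 6 ∨ k = 10 ∨ k = 14 ∨ k = 18) ∧
      ((i = k ∧ j = k + 4) ∨ (i = k + 1 ∧ j = k + 3))) ∨
    ((k = 3 ∨ k = 7 ∨ k = 11 ∨ k = 15 ∨ k = 19) ∧
      ((i = k ∧ j = k + 10) ∨ (i = k + 1 ∧ j = k + 9)))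

instance : DecidableRel sidePairRel := fun i j => by
  unfold sidePairRel; infer_instance

open Relation

private lemma edge (a b : ZMod 20) (h : sidePairRel a b) : EqvGen sidePairRel a b :=
  EqvGen.rel a b h

private lemma edge' (a b : ZMod 20) (h : sidePairRel b a) : EqvGen sidePairRel a b :=
  EqvGen.symm _ _ (EqvGen.rel b a h)

-- chains to representative 1 (odd class)
private lemma c19 : EqvGen sidePairRel 19 1 := edge _ _ (by decide)
private lemma c9 : EqvGen sidePairRel 9 1 := (edge' 9 19 (by decide)).trans _ _ _ c19
private lemma c7 : EqvGen sidePairRel 7 1 := (edge 7 9 (by decide)).trans _ _ _ c9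
private lemma c17 : EqvGen sidePairRel 17 1 := (edge' 17 7 (by decide)).trans _ _ _ c7
private lemma c15 : EqvGen sidePairRel 15 1 := (edge 15 17 (by decide)).trans _ _ _ c17
private lemma c5 : EqvGen sidePairRel 5 1 := (edge' 5 15 (by decide)).trans _ _ _ c15
private lemma c3 : EqvGen sidePairRel 3 1 := (edge 3 5 (by decide)).trans _ _ _ c5
private lemma c13 : EqvGen sidePairRel 13 1 := (edge' 13 3 (by decide)).trans _ _ _ c3
private lemma c11 : EqvGen sidePairRel 11 1 := edge _ _ (by decide)

-- chains to representative 2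
private lemma c18 : EqvGen sidePairRel 18 2 := edge _ _ (by decide)
private lemma c14 : EqvGen sidePairRel 14 2 := (edge 14 18 (by decide)).trans _ _ _ c18
private lemma c10 : EqvGen sidePairRel 10 2 := (edge 10 14 (by decide)).trans _ _ _ c14
private lemma c6 : EqvGen sidePairRel 6 2 := edge' _ _ (by decide)

-- chains to representative 0
private lemma c12 : EqvGen sidePairRel 12 0 := edge _ _ (by decide)
private lemma c8 : EqvGen sidePairRel 8 0 := edge' _ _ (by decide)
private lemma c16 : EqvGen sidePairRel 16 0 := (edge' 16 8 (by decide)).trans _ _ _ c8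
private lemma c4 : EqvGen sidePairRel 4 0 := (edge 4 12 (by decide)).trans _ _ _ c12

private lemma to1 : ∀ i : ZMod 20, i.val % 2 = 1 → EqvGen sidePairRel i 1 := by
  intro i hi
  fin_cases i <;>
    first
      | exact absurd hi (by decide)
      | exact EqvGen.refl 1
      | exact c3 | exact c5 | exact c7 | exact c9 | exact c11
      | exact c13 | exact c15 | exact c17 | exact c19

private lemma to2 : ∀ i : ZMod 20, i.val % 4 = 2 → EqvGen sidePairRel i 2 := by
  intro i hi
  fin_cases i <;>
    first
      | exact absurd hi (by decide)
      | exact EqvGen.refl 2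
      | exact c6 | exact c10 | exact c14 | exact c18

private lemma to0 : ∀ i : ZMod 20, i.val % 4 = 0 → EqvGen sidePairRel i 0 := by
  intro i hi
  fin_cases i <;>
    first
      | exact absurd hi (by decide)
      | exact EqvGen.refl 0
      | exact c4 | exact c8 | exact c12 | exact c16

private lemma base_classes : ∀ i j : ZMod 20, sidePairRel i j →
    ((i.val % 2 = 1 ∧ j.val % 2 = 1) ∨
     (i.val % 4 = 2 ∧ j.val % 4 = 2) ∨
     (i.val % 4 = 0 ∧ j.val % 4 = 0)) := by decide

private lemma eqv_iff : ∀ i j : ZMod 20,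
    Relation.EqvGen sidePairRel i j ↔
      ((i.val % 2 = 1 ∧ j.val % 2 = 1) ∨
       (i.val % 4 = 2 ∧ j.val % 4 = 2) ∨
       (i.val % 4 = 0 ∧ j.val % 4 = 0)) := by
  intro i j
  constructor
  · intro h
    induction h with
    | rel a b hab => exact base_classes a b hab
    | refl a =>
        have : a.val % 2 = 1 ∨ a.val % 4 = 2 ∨ a.val % 4 = 0 := by omega
        tauto
    | symm a b _ ih => tauto
    | trans a b c _ _ ih1 ih2 =>
        rcases ih1 with ⟨h1, h2⟩ | ⟨h1, h2⟩ | ⟨h1, h2⟩ <;>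
          rcases ih2 with ⟨h3, h4⟩ | ⟨h3, h4⟩ | ⟨h3, h4⟩ <;>
            first | tauto | omega
  · rintro (⟨hi, hj⟩ | ⟨hi, hj⟩ | ⟨hi, hj⟩)
    · exact (to1 i hi).trans _ _ _ ((to1 j hj).symm _ _)
    · exact (to2 i hi).trans _ _ _ ((to2 j hj).symm _ _)
    · exact (to0 i hi).trans _ _ _ ((to0 j hj).symm _ _)

/-- The side pairings of the 20-gon yield exactly 3 equivalence classes of
vertices: the odd-indexed vertices form one class, the vertices with index
`≡ 2 (mod 4)` a second, and those with index `≡ 0 (mod 4)` a third. -/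
theorem twentyGon_vertex_classes :
    (∀ i j : ZMod 20,
      Relation.EqvGen sidePairRel i j ↔
        ((i.val % 2 = 1 ∧ j.val % 2 = 1) ∨
         (i.val % 4 = 2 ∧ j.val % 4 = 2) ∨
         (i.val % 4 = 0 ∧ j.val % 4 = 0))) ∧
    Nat.card (Quot sidePairRel) = 3 := by
  refine ⟨eqv_iff, ?_⟩
  have hg : ∀ i j : ZMod 20, sidePairRel i j →
      (if i.val % 2 = 1 then (0 : Fin 3) else if i.val % 4 = 2 then 1 else 2) =
      (if j.val % 2 = 1 then (0 : Fin 3) else if j.val % 4 = 2 then 1 else 2) := by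
    intro i j h
    rcases base_classes i j h with ⟨h1, h2⟩ | ⟨h1, h2⟩ | ⟨h1, h2⟩ <;>
      · have hi2 := i.val_lt; have hj2 := j.val_lt
        rcases Nat.even_or_odd i.val with he | he <;>
          rcases Nat.even_or_odd j.val with he' | he' <;>
            simp [Nat.even_iff, Nat.odd_iff] at he he' <;>
              split_ifs <;> first | rfl | omega
  let g : Quot sidePairRel → Fin 3 :=
    Quot.lift (fun i : ZMod 20 =>
      if i.val % 2 = 1 then (0 : Fin 3) else if i.val % 4 = 2 then 1 else 2) hg
  have hbij : Function.Bijective g := by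
    constructor
    · rintro ⟨i⟩ ⟨j⟩ hij
      simp only [g] at hij
      apply Quot.eqvGen_sound
      rw [eqv_iff]
      split_ifs at hij <;> first | exact absurd hij (by decide) | omega
    · intro x
      fin_cases x
      · exact ⟨Quot.mk _ 1, rfl⟩
      · exact ⟨Quot.mk _ 2, rfl⟩
      · exact ⟨Quot.mk _ 0, rfl⟩
  rw [Nat.card_eq_of_bijective g hbij]
  simp
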